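/- Let D be an infinite domain, r a database instance over D, and IC a set of domain independent binary integrity constraints. Then the map S ↦ {p(ā) | p′(ā) ∈ S} is a one-to-one correspondence between the answer sets of the repair program Π(r) (built with the active-domain predicate act_r in place of dom) and the repairs of r wrt IC. -/

import Mathlib

namespace CQA

/-! ## Ground disjunctive extended logic programs and answer sets -/

/-- Ground literals over atoms of type `α`: atoms and classically negated atoms. -/
inductive Lit (α : Type) : Type
  | pos : α → Lit α
  | neg : α → Lit α

/-- Complement of a ground literal. -/
def Lit.compl {α : Type} : Lit α → Lit α
  | .pos a => .neg a
  | .neg a => .pos a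

/-- A ground disjunctive rule `⋁ head ← body, not nbody`
(`nbody` collects the literals occurring under weak negation `not`). -/
structure Rule (α : Type) where
  head : Set (Lit α)
  body : Set (Lit α)
  nbody : Set (Lit α)

/-- A ground disjunctive extended logic program: a set of ground rules. -/
abbrev Program (α : Type) := Set (Rule α)

/-- A fact. -/
def fact {α : Type} (L : Lit α) : Rule α := ⟨{L}, ∅, ∅⟩

/-- `S` contains no complementary pair of literals. -/
def Coherent {α : Type} (S : Set (Lit α)) : Prop :=
  ∀ a : α, ¬ (Lit.pos a ∈ S ∧ Lit.neg a ∈ S)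

/-- `S` satisfies every rule of `P`, reading `not L` as `L ∉ S`:
whenever all body literals are in `S` and no weakly negated literal is in `S`,
some head disjunct is in `S`. -/
def SatProg {α : Type} (S : Set (Lit α)) (P : Program α) : Prop :=
  ∀ R ∈ P, R.body ⊆ S → (∀ L ∈ R.nbody, L ∉ S) → ∃ L ∈ R.head, L ∈ S

/-- A model of a ground program: a set of ground literals without complementary
pairs satisfying every rule, with `not L` read as `L ∉ S`. -/
def IsModel {α : Type} (S : Set (Lit α)) (P : Program α) : Prop :=
  Coherent S ∧ SatProg S P

/-- The Gelfond–Lifschitz reduct of `P` with respect to `S`: delete every rule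
whose body contains `not L` with `L ∈ S`, then delete all remaining `not L`
conditions. -/
def reduct {α : Type} (P : Program α) (S : Set (Lit α)) : Program α :=
  {R' | ∃ R ∈ P, (∀ L ∈ R.nbody, L ∉ S) ∧ R' = Rule.mk R.head R.body ∅}

/-- `S` is an answer set of `P`: `S` has no complementary pair and is a minimal
model of the reduct `^S P`. -/
def AnswerSet {α : Type} (S : Set (Lit α)) (P : Program α) : Prop :=
  Coherent S ∧ SatProg S (reduct P S) ∧
    ∀ S' : Set (Lit α), S' ⊆ S → SatProg S' (reduct P S) → S' = S

/-- The intersection of all answer sets of `P`. -/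
def Core {α : Type} (P : Program α) : Set (Lit α) :=
  {L | ∀ S : Set (Lit α), AnswerSet S P → L ∈ S}

/-! ## Well-founded semantics for ground extended disjunctive programs -/

/-- The body of rule `R` is true in the partial interpretation `I`:
the body literals belong to `I` and every weakly negated literal is false
(its complement belongs to `I`). -/
def bodyTrue {α : Type} (I : Set (Lit α)) (R : Rule α) : Prop :=
  R.body ⊆ I ∧ ∀ L ∈ R.nbody, L.compl ∈ I

/-- Immediate-consequence operator `T_Π(I)`: all literals occurring in the head
of a rule whose body is true in `I` and whose remaining head disjuncts are
false in `I`. -/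
def Timm {α : Type} (P : Program α) (I : Set (Lit α)) : Set (Lit α) :=
  {L | ∃ R ∈ P, L ∈ R.head ∧ bodyTrue I R ∧ ∀ L' ∈ R.head, L' ≠ L → L'.compl ∈ I}

/-- `X` is an unfounded set of literals with respect to `I`: for every `L ∈ X`
and every rule with `L` in its head, either the body is false or defeated
(some body literal has its complement in `I` or lies in `X`, or some weakly
negated literal is in `I`), or the head is already satisfied by `I`
independently of `X`. -/
def UnfoundedSet {α : Type} (P : Program α) (I X : Set (Lit α)) : Prop :=
  ∀ L ∈ X, ∀ R ∈ P, L ∈ R.head →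
    (∃ B ∈ R.body, B.compl ∈ I ∨ B ∈ X) ∨
    (∃ B ∈ R.nbody, B ∈ I) ∨
    (∃ L' ∈ R.head, L' ≠ L ∧ L' ∈ I ∧ L' ∉ X)

/-- The greatest unfounded set of `P` with respect to `I`. -/
def GUS {α : Type} (P : Program α) (I : Set (Lit α)) : Set (Lit α) :=
  ⋃₀ {X | UnfoundedSet P I X}

/-- The well-founded operator `𝒲_Π(I) := T_Π(I) ∪ ¬.GUS_Π(I)`. -/
def WOp {α : Type} (P : Program α) (I : Set (Lit α)) : Set (Lit α) :=
  Timm P I ∪ Lit.compl '' GUS P I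

/-- The well-founded interpretation `W_Π`, the least fixpoint `𝒲_Π^ω(∅)`. -/
def WFInterp {α : Type} (P : Program α) : Set (Lit α) :=
  ⋃ n : ℕ, (WOp P)^[n] ∅

/-! ## Relational databases and binary integrity constraints -/

/-- A ground database atom `p(ā)` over predicates `Pred` and domain `D`. -/
abbrev DBAtom (Pred D : Type) := Pred × List D

/-- A database instance over the schema `(Pred, ar)` and domain `D`:
a finite set of ground atoms respecting the arities. -/
structure Instance (Pred D : Type) (ar : Pred → ℕ) where
  atoms : Set (DBAtom Pred D)
  finite : atoms.Finite
  wf : ∀ a ∈ atoms, a.2.length = ar a.1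

/-- A binary integrity constraint in standard format
`∀ (⋁_i p_i(x̄_i) ∨ ⋁_i ¬q_i(ȳ_i) ∨ φ)` with `1 ≤ n + m ≤ 2`,
where `φ` is a formula of built-in predicates with fixed extensions
(represented semantically as a predicate on variable assignments). -/
structure BIC (Pred D : Type) (ar : Pred → ℕ) where
  nvars : ℕ
  pos : List (Pred × List (Fin nvars))
  neg : List (Pred × List (Fin nvars))
  builtin : (Fin nvars → D) → Prop
  wfpos : ∀ a ∈ pos, a.2.length = ar a.1
  wfneg : ∀ a ∈ neg, a.2.length = ar a.1
  lb : 1 ≤ pos.length + neg.length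
  ub : pos.length + neg.length ≤ 2

variable {Pred D : Type} {ar : Pred → ℕ}

/-- The ground clause of constraint `c` under the assignment `ν` holds in the
set of atoms `A`. -/
def BIC.holdsAt (c : BIC Pred D ar) (A : Set (DBAtom Pred D)) (ν : Fin c.nvars → D) : Prop :=
  (∃ a ∈ c.pos, (a.1, a.2.map ν) ∈ A) ∨ (∃ a ∈ c.neg, (a.1, a.2.map ν) ∉ A) ∨ c.builtin ν

/-- The set of atoms `A` (as a Herbrand structure over `D`) satisfies all
constraints in `IC`. -/
def SatSet (A : Set (DBAtom Pred D)) (IC : Set (BIC Pred D ar)) : Prop :=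
  ∀ c ∈ IC, ∀ ν : Fin c.nvars → D, c.holdsAt A ν

/-- The instance `r` satisfies the set of integrity constraints `IC`. -/
def SatIC (r : Instance Pred D ar) (IC : Set (BIC Pred D ar)) : Prop :=
  SatSet r.atoms IC

/-- `r'` is a repair of `r` w.r.t. `IC`: `r' ⊨ IC` and the symmetric difference
`Δ(r,r')` is minimal under set inclusion in `{Δ(r,r*) | r* ⊨ IC}`. -/
def IsRepair (r r' : Instance Pred D ar) (IC : Set (BIC Pred D ar)) : Prop :=
  SatIC r' IC ∧
    ∀ r'' : Instance Pred D ar, SatIC r'' IC →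
      symmDiff r.atoms r''.atoms ⊆ symmDiff r.atoms r'.atoms →
      symmDiff r.atoms r''.atoms = symmDiff r.atoms r'.atoms

/-- `r'` is a Dalal repair of `r` w.r.t. `IC`: `r' ⊨ IC` and the cardinality
`|Δ(r,r')|` is minimal in `{|Δ(r,r*)| : r* ⊨ IC}`. -/
def IsDalalRepair (r r' : Instance Pred D ar) (IC : Set (BIC Pred D ar)) : Prop :=
  SatIC r' IC ∧
    ∀ r'' : Instance Pred D ar, SatIC r'' IC →
      (symmDiff r.atoms r'.atoms).ncard ≤ (symmDiff r.atoms r''.atoms).ncard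

/-! ## The change program and the repair program -/

/-- Atoms of the repair programs: database atoms `p(ā)`, primed atoms `p′(ā)`,
and domain atoms `dom(a)` (playing the role of `act_r(a)` when grounding over
the active domain). -/
inductive GAtom (Pred D : Type) : Type
  | base : Pred → List D → GAtom Pred D
  | primed : Pred → List D → GAtom Pred D
  | dom : D → GAtom Pred D

/-- Variables occurring in a list of atoms with variable tuples. -/
def varsIn {n : ℕ} (l : List (Pred × List (Fin n))) : Set (Fin n) :=
  {v | ∃ a ∈ l, v ∈ a.2}

/-- The domain atoms `dom(ν v)` for the variables `v ∈ V`. -/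
def domBody {n : ℕ} (ν : Fin n → D) (V : Set (Fin n)) : Set (Lit (GAtom Pred D)) :=
  {L | ∃ v ∈ V, L = Lit.pos (GAtom.dom (ν v))}

/-- The positive primed head disjuncts `p′_i(ν x̄_i)` of constraint `c`. -/
def posHead (c : BIC Pred D ar) (ν : Fin c.nvars → D) : Set (Lit (GAtom Pred D)) :=
  {L | ∃ a ∈ c.pos, L = Lit.pos (GAtom.primed a.1 (a.2.map ν))}

/-- The negative primed head disjuncts `¬q′_i(ν ȳ_i)` of constraint `c`. -/
def negHead (c : BIC Pred D ar) (ν : Fin c.nvars → D) : Set (Lit (GAtom Pred D)) :=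
  {L | ∃ a ∈ c.neg, L = Lit.neg (GAtom.primed a.1 (a.2.map ν))}

/-- The triggering rule of constraint `c` at assignment `ν`:
`⋁ p′_i ∨ ⋁ ¬q′_i ← dom(x̄_1,…,x̄_n), not p_1,…,not p_n, q_1,…,q_m, not φ`
(the condition `not φ` on the built-in formula, which has a fixed extension,
is accounted for by including the ground rule only when `φ(ν)` is false). -/
def trigRule (c : BIC Pred D ar) (ν : Fin c.nvars → D) : Rule (GAtom Pred D) where
  head := posHead c ν ∪ negHead c ν
  body := domBody ν (varsIn c.pos) ∪
    {L | ∃ a ∈ c.neg, L = Lit.pos (GAtom.base a.1 (a.2.map ν))}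
  nbody := {L | ∃ a ∈ c.pos, L = Lit.pos (GAtom.base a.1 (a.2.map ν))}

/-- The stabilizing rule of `c` at `ν` for the `j`-th positive database literal:
remove `p′_j` from the disjunctive head and add its complement `¬p′_j` to the
body, together with the `dom` atoms and `not φ`. -/
def stabPosRule (c : BIC Pred D ar) (ν : Fin c.nvars → D) (j : Fin c.pos.length) :
    Rule (GAtom Pred D) where
  head := {L | ∃ i : Fin c.pos.length, i ≠ j ∧
      L = Lit.pos (GAtom.primed (c.pos.get i).1 ((c.pos.get i).2.map ν))} ∪ negHead c ν
  body := domBody ν (varsIn c.pos ∪ varsIn c.neg) ∪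
    {Lit.neg (GAtom.primed (c.pos.get j).1 ((c.pos.get j).2.map ν))}
  nbody := ∅

/-- The stabilizing rule of `c` at `ν` for the `j`-th negative database literal:
remove `¬q′_j` from the disjunctive head and add its complement `q′_j` to the
body, together with the `dom` atoms and `not φ`. -/
def stabNegRule (c : BIC Pred D ar) (ν : Fin c.nvars → D) (j : Fin c.neg.length) :
    Rule (GAtom Pred D) where
  head := posHead c ν ∪ {L | ∃ i : Fin c.neg.length, i ≠ j ∧
      L = Lit.neg (GAtom.primed (c.neg.get i).1 ((c.neg.get i).2.map ν))}
  body := domBody ν (varsIn c.pos ∪ varsIn c.neg) ∪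
    {Lit.pos (GAtom.primed (c.neg.get j).1 ((c.neg.get j).2.map ν))}
  nbody := ∅

/-- The change program `Π_Δ(r)` grounded over the subdomain `A ⊆ D`:
facts for `r` and for the (active) domain, triggering rules and stabilizing
rules for all constraints in `IC`. -/
def changeProgOn (r : Instance Pred D ar) (IC : Set (BIC Pred D ar)) (A : Set D) :
    Program (GAtom Pred D) :=
  {R | ∃ a ∈ r.atoms, R = fact (Lit.pos (GAtom.base a.1 a.2))} ∪
  {R | ∃ d ∈ A, R = fact (Lit.pos (GAtom.dom d))} ∪
  {R | ∃ c ∈ IC, ∃ ν : Fin c.nvars → D, (∀ i, ν i ∈ A) ∧ ¬ c.builtin ν ∧ R = trigRule c ν} ∪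
  {R | ∃ c ∈ IC, ∃ ν : Fin c.nvars → D, (∀ i, ν i ∈ A) ∧ ¬ c.builtin ν ∧
        ∃ j : Fin c.pos.length, R = stabPosRule c ν j} ∪
  {R | ∃ c ∈ IC, ∃ ν : Fin c.nvars → D, (∀ i, ν i ∈ A) ∧ ¬ c.builtin ν ∧
        ∃ j : Fin c.neg.length, R = stabNegRule c ν j}

/-- The change program `Π_Δ(r)` grounded over the full domain `D`. -/
def changeProg (r : Instance Pred D ar) (IC : Set (BIC Pred D ar)) :
    Program (GAtom Pred D) :=
  changeProgOn r IC Set.univ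

/-- The persistence rules `p′(x̄) ← p(x̄), not ¬p′(x̄)` and
`¬p′(x̄) ← dom(x̄), not p(x̄), not p′(x̄)`, grounded over `A ⊆ D`. -/
def persistProgOn (ar : Pred → ℕ) (A : Set D) : Program (GAtom Pred D) :=
  {R | ∃ (p : Pred) (t : List D), t.length = ar p ∧ (∀ d ∈ t, d ∈ A) ∧
    (R = Rule.mk {Lit.pos (GAtom.primed p t)} {Lit.pos (GAtom.base p t)}
          {Lit.neg (GAtom.primed p t)} ∨
     R = Rule.mk {Lit.neg (GAtom.primed p t)} {L | ∃ d ∈ t, L = Lit.pos (GAtom.dom d)}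
          {Lit.pos (GAtom.base p t), Lit.pos (GAtom.primed p t)})}

/-- The repair program `Π(r)` grounded over `A ⊆ D`: the change program plus
the persistence rules. -/
def repairProgOn (r : Instance Pred D ar) (IC : Set (BIC Pred D ar)) (A : Set D) :
    Program (GAtom Pred D) :=
  changeProgOn r IC A ∪ persistProgOn ar A

/-- The repair program `Π(r)` grounded over the full domain `D`. -/
def repairProg (r : Instance Pred D ar) (IC : Set (BIC Pred D ar)) :
    Program (GAtom Pred D) :=
  repairProgOn r IC Set.univ

/-- The database instance corresponding to a set of ground literals:
`I(S) = {p(ā) | p′(ā) ∈ S} ∪ {p(ā) | p(ā) ∈ S and ¬p′(ā) ∉ S}`. -/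
def IofS (S : Set (Lit (GAtom Pred D))) : Set (DBAtom Pred D) :=
  {a | Lit.pos (GAtom.primed a.1 a.2) ∈ S} ∪
  {a | Lit.pos (GAtom.base a.1 a.2) ∈ S ∧ Lit.neg (GAtom.primed a.1 a.2) ∉ S}

/-- The database instance `{p(ā) | p′(ā) ∈ S}` extracted from the primed
atoms of `S`. -/
def primedAtoms (S : Set (Lit (GAtom Pred D))) : Set (DBAtom Pred D) :=
  {a | Lit.pos (GAtom.primed a.1 a.2) ∈ S}

/-- `S(r,r′) = {p(ā) | p(ā) ∈ r} ∪ {p′(ā) | p(ā) ∈ r′} ∪ {¬p′(ā) | p(ā) ∉ r′}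
∪ {dom(a) | a ∈ D}`. -/
def SofRR (r r' : Instance Pred D ar) : Set (Lit (GAtom Pred D)) :=
  {L | ∃ a ∈ r.atoms, L = Lit.pos (GAtom.base a.1 a.2)} ∪
  {L | ∃ a ∈ r'.atoms, L = Lit.pos (GAtom.primed a.1 a.2)} ∪
  {L | ∃ a : DBAtom Pred D, a.2.length = ar a.1 ∧ a ∉ r'.atoms ∧
        L = Lit.neg (GAtom.primed a.1 a.2)} ∪
  {L | ∃ d : D, L = Lit.pos (GAtom.dom d)}

/-! ## Active domain and domain independence -/

/-- The active domain of `r`: the constants occurring in `r`. -/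
def ActDom (r : Instance Pred D ar) : Set D :=
  {d | ∃ a ∈ r.atoms, d ∈ a.2}

/-- Satisfaction of `IC` in `A` relativized to the subdomain `Dm`. -/
def SatSetOn (A : Set (DBAtom Pred D)) (IC : Set (BIC Pred D ar)) (Dm : Set D) : Prop :=
  ∀ c ∈ IC, ∀ ν : Fin c.nvars → D, (∀ i, ν i ∈ Dm) → c.holdsAt A ν

/-- `IC` is domain independent: for every instance, satisfaction of the
constraints depends only on the active domain. -/
def DomIndep (IC : Set (BIC Pred D ar)) : Prop :=
  ∀ (r : Instance Pred D ar) (A : Set D), ActDom r ⊆ A →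
    (SatSetOn r.atoms IC A ↔ SatSet r.atoms IC)

/-! ## Weak constraints and Dalal answer sets -/

/-- The violated ground instances of the weak constraints
`⇐ p′(x̄), not p(x̄)` and `⇐ ¬p′(x̄), p(x̄)` in `S` (a ground weak constraint
is violated by `S` iff all its body conditions hold in `S`). -/
def weakViol (ar : Pred → ℕ) (S : Set (Lit (GAtom Pred D))) :
    Set (Bool × DBAtom Pred D) :=
  {x | x.2.2.length = ar x.2.1 ∧
    ((x.1 = true ∧ Lit.pos (GAtom.primed x.2.1 x.2.2) ∈ S ∧
        Lit.pos (GAtom.base x.2.1 x.2.2) ∉ S) ∨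
     (x.1 = false ∧ Lit.neg (GAtom.primed x.2.1 x.2.2) ∈ S ∧
        Lit.pos (GAtom.base x.2.1 x.2.2) ∈ S))}

/-- Answer sets of the program `Π^D(r)` (the change program plus the weak
constraints): answer sets of `Π_Δ(r)` minimizing the number of violated
ground weak constraints. -/
def DalalAnswerSet (r : Instance Pred D ar) (IC : Set (BIC Pred D ar))
    (S : Set (Lit (GAtom Pred D))) : Prop :=
  AnswerSet S (changeProg r IC) ∧
    ∀ S' : Set (Lit (GAtom Pred D)), AnswerSet S' (changeProg r IC) →
      (weakViol ar S).ncard ≤ (weakViol ar S').ncard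

/-! ## Functional dependencies and unary constraints -/

/-- A unary integrity constraint: a BIC with at most one database literal. -/
def BIC.IsUnary (c : BIC Pred D ar) : Prop := c.pos.length + c.neg.length ≤ 1

/-- A functional dependency: a BIC of the form
`∀ (¬p(x̄,ȳ) ∨ ¬p(x̄,z̄) ∨ ȳ = z̄)` with pairwise distinct variables. -/
def BIC.IsFD (c : BIC Pred D ar) : Prop :=
  c.pos = [] ∧ ∃ (p : Pred) (xs ys zs : List (Fin c.nvars)),
    ys.length = zs.length ∧ (xs ++ ys ++ zs).Nodup ∧
    c.neg = [(p, xs ++ ys), (p, xs ++ zs)] ∧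
    ∀ ν : Fin c.nvars → D, (c.builtin ν ↔ ys.map ν = zs.map ν)

/-! ## Auxiliary development for Statement 7 -/

section Statement7Proof

variable {Pred D : Type} {ar : Pred → ℕ}

/-- Ground instantiation of an atom with variables. -/
def grd {n : ℕ} (ν : Fin n → D) (a : Pred × List (Fin n)) : DBAtom Pred D :=
  (a.1, a.2.map ν)

/-- All well-formed potential atoms over the active domain of `r`. -/
def Tset (r : Instance Pred D ar) : Set (DBAtom Pred D) :=
  {a | a.2.length = ar a.1 ∧ ∀ d ∈ a.2, d ∈ ActDom r}

lemma atoms_subset_Tset (r : Instance Pred D ar) : r.atoms ⊆ Tset r :=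
  fun a ha => ⟨r.wf a ha, fun d hd => ⟨a, ha, hd⟩⟩

lemma grd_mem_Tset {r : Instance Pred D ar} {n : ℕ} {ν : Fin n → D}
    (hν : ∀ i, ν i ∈ ActDom r) {a : Pred × List (Fin n)} (hl : a.2.length = ar a.1) :
    grd ν a ∈ Tset r := by
  refine ⟨by simpa [grd] using hl, ?_⟩
  intro d hd
  simp only [grd, List.mem_map] at hd
  obtain ⟨i, -, rfl⟩ := hd
  exact hν i

/-- The canonical literal set determined by a "lower/upper" pair of instances. -/
def canonS2 (r : Instance Pred D ar) (m M : Set (DBAtom Pred D)) :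
    Set (Lit (GAtom Pred D)) :=
  {L | (∃ a ∈ r.atoms, L = Lit.pos (GAtom.base a.1 a.2)) ∨
       (∃ d ∈ ActDom r, L = Lit.pos (GAtom.dom d)) ∨
       (∃ a ∈ m, L = Lit.pos (GAtom.primed a.1 a.2)) ∨
       (∃ a ∈ Tset r, a ∉ M ∧ L = Lit.neg (GAtom.primed a.1 a.2))}

/-- The canonical candidate answer set determined by an instance `ρ`. -/
abbrev canonS (r : Instance Pred D ar) (ρ : Set (DBAtom Pred D)) :
    Set (Lit (GAtom Pred D)) := canonS2 r ρ ρ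

@[simp] lemma mem_c2_posBase {r : Instance Pred D ar} {m M : Set (DBAtom Pred D)}
    {p : Pred} {t : List D} :
    Lit.pos (GAtom.base p t) ∈ canonS2 r m M ↔ (p, t) ∈ r.atoms := by
  constructor
  · rintro (⟨a, ha, h⟩ | ⟨d, hd, h⟩ | ⟨a, ha, h⟩ | ⟨a, ha, h2, h⟩) <;> simp_all
  · intro h; exact Or.inl ⟨(p, t), h, rfl⟩

@[simp] lemma mem_c2_posDom {r : Instance Pred D ar} {m M : Set (DBAtom Pred D)}
    {d : D} :
    Lit.pos (GAtom.dom d) ∈ canonS2 r m M ↔ d ∈ ActDom r := by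
  constructor
  · rintro (⟨a, ha, h⟩ | ⟨e, he, h⟩ | ⟨a, ha, h⟩ | ⟨a, ha, h2, h⟩) <;> simp_all
  · intro h; exact Or.inr (Or.inl ⟨d, h, rfl⟩)

@[simp] lemma mem_c2_posPrimed {r : Instance Pred D ar} {m M : Set (DBAtom Pred D)}
    {p : Pred} {t : List D} :
    Lit.pos (GAtom.primed p t) ∈ canonS2 r m M ↔ (p, t) ∈ m := by
  constructor
  · rintro (⟨a, ha, h⟩ | ⟨d, hd, h⟩ | ⟨a, ha, h⟩ | ⟨a, ha, h2, h⟩) <;> simp_all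
  · intro h; exact Or.inr (Or.inr (Or.inl ⟨(p, t), h, rfl⟩))

@[simp] lemma mem_c2_negPrimed {r : Instance Pred D ar} {m M : Set (DBAtom Pred D)}
    {p : Pred} {t : List D} :
    Lit.neg (GAtom.primed p t) ∈ canonS2 r m M ↔ (p, t) ∈ Tset r ∧ (p, t) ∉ M := by
  constructor
  · rintro (⟨a, ha, h⟩ | ⟨d, hd, h⟩ | ⟨a, ha, h⟩ | ⟨a, ha, h2, h⟩) <;> simp_all
  · rintro ⟨h1, h2⟩; exact Or.inr (Or.inr (Or.inr ⟨(p, t), h1, h2, rfl⟩))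

@[simp] lemma mem_c2_negBase {r : Instance Pred D ar} {m M : Set (DBAtom Pred D)}
    {p : Pred} {t : List D} :
    Lit.neg (GAtom.base p t) ∉ canonS2 r m M := by
  rintro (⟨a, ha, h⟩ | ⟨d, hd, h⟩ | ⟨a, ha, h⟩ | ⟨a, ha, h2, h⟩) <;> simp_all

@[simp] lemma mem_c2_negDom {r : Instance Pred D ar} {m M : Set (DBAtom Pred D)}
    {d : D} :
    Lit.neg (GAtom.dom d) ∉ canonS2 r m M := by
  rintro (⟨a, ha, h⟩ | ⟨e, he, h⟩ | ⟨a, ha, h⟩ | ⟨a, ha, h2, h⟩) <;> simp_all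

lemma coherent_canonS2 {r : Instance Pred D ar} {m M : Set (DBAtom Pred D)}
    (h : m ⊆ M) : Coherent (canonS2 r m M) := by
  rintro (p | q | d) ⟨h1, h2⟩
  · exact mem_c2_negBase h2
  · rename_i t
    rw [mem_c2_posPrimed] at h1
    rw [mem_c2_negPrimed] at h2
    exact h2.2 (h h1)
  · exact mem_c2_negDom h2

lemma primedAtoms_canonS2 {r : Instance Pred D ar} {m M : Set (DBAtom Pred D)} :
    primedAtoms (canonS2 r m M) = m := by
  ext a
  simp [primedAtoms]

lemma satProg_reduct_iff {α : Type} (S' S : Set (Lit α)) (P : Program α) :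
    SatProg S' (reduct P S) ↔
      ∀ R ∈ P, (∀ L ∈ R.nbody, L ∉ S) → R.body ⊆ S' → ∃ L ∈ R.head, L ∈ S' := by
  constructor
  · intro h R hR hn hb
    exact h (Rule.mk R.head R.body ∅) ⟨R, hR, hn, rfl⟩ hb (by simp)
  · intro h R' hR' hb hn
    obtain ⟨R, hR, hnb, rfl⟩ := hR'
    exact h R hR hnb hb

lemma mem_rp_iff {r : Instance Pred D ar} {IC : Set (BIC Pred D ar)} {As : Set D}
    {R : Rule (GAtom Pred D)} :
    R ∈ repairProgOn r IC As ↔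
      (∃ a ∈ r.atoms, R = fact (Lit.pos (GAtom.base a.1 a.2))) ∨
      (∃ d ∈ As, R = fact (Lit.pos (GAtom.dom d))) ∨
      (∃ c ∈ IC, ∃ ν : Fin c.nvars → D, (∀ i, ν i ∈ As) ∧ ¬ c.builtin ν ∧ R = trigRule c ν) ∨
      (∃ c ∈ IC, ∃ ν : Fin c.nvars → D, (∀ i, ν i ∈ As) ∧ ¬ c.builtin ν ∧
        ∃ j : Fin c.pos.length, R = stabPosRule c ν j) ∨
      (∃ c ∈ IC, ∃ ν : Fin c.nvars → D, (∀ i, ν i ∈ As) ∧ ¬ c.builtin ν ∧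
        ∃ j : Fin c.neg.length, R = stabNegRule c ν j) ∨
      (∃ (p : Pred) (t : List D), t.length = ar p ∧ (∀ d ∈ t, d ∈ As) ∧
        (R = Rule.mk {Lit.pos (GAtom.primed p t)} {Lit.pos (GAtom.base p t)}
            {Lit.neg (GAtom.primed p t)} ∨
         R = Rule.mk {Lit.neg (GAtom.primed p t)} {L | ∃ d ∈ t, L = Lit.pos (GAtom.dom d)}
            {Lit.pos (GAtom.base p t), Lit.pos (GAtom.primed p t)})) := by
  constructor
  · intro h
    rcases h with ((((h | h) | h) | h) | h) | h
    · exact Or.inl h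
    · exact Or.inr (Or.inl h)
    · exact Or.inr (Or.inr (Or.inl h))
    · exact Or.inr (Or.inr (Or.inr (Or.inl h)))
    · exact Or.inr (Or.inr (Or.inr (Or.inr (Or.inl h))))
    · exact Or.inr (Or.inr (Or.inr (Or.inr (Or.inr h))))
  · intro h
    rcases h with h | h | h | h | h | h
    · exact Or.inl (Or.inl (Or.inl (Or.inl (Or.inl h))))
    · exact Or.inl (Or.inl (Or.inl (Or.inl (Or.inr h))))
    · exact Or.inl (Or.inl (Or.inl (Or.inr h)))
    · exact Or.inl (Or.inl (Or.inr h))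
    · exact Or.inl (Or.inr h)
    · exact Or.inr h

lemma actDom_finite (r : Instance Pred D ar) : (ActDom r).Finite := by
  have : ActDom r = ⋃ a ∈ r.atoms, {d | d ∈ a.2} := by
    ext d; simp [ActDom]
  rw [this]
  exact Set.Finite.biUnion r.finite (fun a _ => a.2.finite_toSet)

lemma listset_finite {A : Set D} (hA : A.Finite) (n : ℕ) :
    {l : List D | l.length = n ∧ ∀ d ∈ l, d ∈ A}.Finite := by
  induction n with
  | zero =>
    refine Set.Finite.subset (Set.finite_singleton ([] : List D)) ?_
    rintro l ⟨h1, -⟩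
    simp [List.length_eq_zero_iff.1 h1]
  | succ n ih =>
    refine Set.Finite.subset (Set.Finite.image2 List.cons hA ih) ?_
    rintro l ⟨h1, h2⟩
    cases l with
    | nil => simp at h1
    | cons x xs =>
      exact Set.mem_image2_of_mem (h2 x (by simp))
        ⟨by simpa using h1, fun d hd => h2 d (by simp [hd])⟩

lemma tset_finite [Finite Pred] (r : Instance Pred D ar) : (Tset r).Finite := by
  have h : Tset r ⊆ ⋃ p : Pred,
      {p} ×ˢ {l : List D | l.length = ar p ∧ ∀ d ∈ l, d ∈ ActDom r} := by
    rintro ⟨p, t⟩ ⟨h1, h2⟩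
    exact Set.mem_iUnion.2 ⟨p, by simp, h1, h2⟩
  exact Set.Finite.subset (Set.finite_iUnion fun p =>
    Set.Finite.prod (Set.finite_singleton p) (listset_finite (actDom_finite r) (ar p))) h

lemma two_le_length {α : Type*} {l : List α} {x y : α} (hx : x ∈ l) (hy : y ∈ l)
    (hxy : x ≠ y) : 2 ≤ l.length := by
  obtain ⟨i, rfl⟩ := List.mem_iff_get.1 hx
  obtain ⟨j, rfl⟩ := List.mem_iff_get.1 hy
  have hij : i.val ≠ j.val := fun h => hxy (by rw [Fin.ext h])
  have := i.isLt; have := j.isLt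
  omega

lemma three_le_length {α : Type*} {l : List α} {x y z : α} (hx : x ∈ l) (hy : y ∈ l)
    (hz : z ∈ l) (hxy : x ≠ y) (hxz : x ≠ z) (hyz : y ≠ z) : 3 ≤ l.length := by
  obtain ⟨i, rfl⟩ := List.mem_iff_get.1 hx
  obtain ⟨j, rfl⟩ := List.mem_iff_get.1 hy
  obtain ⟨k, rfl⟩ := List.mem_iff_get.1 hz
  have hij : i.val ≠ j.val := fun h => hxy (by rw [Fin.ext h])
  have hik : i.val ≠ k.val := fun h => hxz (by rw [Fin.ext h])
  have hjk : j.val ≠ k.val := fun h => hyz (by rw [Fin.ext h])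
  have := i.isLt; have := j.isLt; have := k.isLt
  omega

/-- grounds of distinct ground value are distinct entries -/
lemma get_mem' {α : Type*} (l : List α) (i : Fin l.length) : l.get i ∈ l :=
  List.get_mem l i

lemma grd_ne {n : ℕ} {ν : Fin n → D} {a b : Pred × List (Fin n)}
    (h : grd (Pred := Pred) ν a ≠ grd ν b) : a ≠ b := fun he => h (by rw [he])

lemma facts_mem {r : Instance Pred D ar} {IC : Set (BIC Pred D ar)}
    {S' S : Set (Lit (GAtom Pred D))}
    (h : SatProg S' (reduct (repairProgOn r IC (ActDom r)) S)) :
    (∀ a ∈ r.atoms, Lit.pos (GAtom.base a.1 a.2) ∈ S') ∧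
    (∀ d ∈ ActDom r, Lit.pos (GAtom.dom d) ∈ S') := by
  rw [satProg_reduct_iff] at h
  constructor
  · intro a ha
    have := h _ (mem_rp_iff.2 (Or.inl ⟨a, ha, rfl⟩))
      (by intro L hL; simp [fact] at hL) (by intro L hL; simp [fact] at hL)
    simpa [fact] using this
  · intro d hd
    have := h _ (mem_rp_iff.2 (Or.inr (Or.inl ⟨d, hd, rfl⟩)))
      (by intro L hL; simp [fact] at hL) (by intro L hL; simp [fact] at hL)
    simpa [fact] using this

/-- The key computation: the canonical set attached to the pair
`(ρ ∩ ρ₂, ρ ∪ (r ∩ ρ₂))` satisfies the reduct of the repair program w.r.t.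
`canonS r ρ`. -/
lemma canonS2_models_reduct {r : Instance Pred D ar} {IC : Set (BIC Pred D ar)}
    {ρ ρ₂ : Set (DBAtom Pred D)}
    (hρ : SatSetOn ρ IC (ActDom r)) (hρ₂ : SatSetOn ρ₂ IC (ActDom r))
    (hc1 : ∀ a, a ∈ ρ₂ → a ∉ r.atoms → a ∈ ρ)
    (hc2 : ∀ a, a ∈ r.atoms → a ∉ ρ₂ → a ∉ ρ) :
    SatProg (canonS2 r (ρ ∩ ρ₂) (ρ ∪ (r.atoms ∩ ρ₂)))
      (reduct (repairProgOn r IC (ActDom r)) (canonS r ρ)) := by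
  set m : Set (DBAtom Pred D) := ρ ∩ ρ₂ with hm
  set M : Set (DBAtom Pred D) := ρ ∪ (r.atoms ∩ ρ₂) with hM
  rw [satProg_reduct_iff]
  intro R hR hnb hbody
  rcases mem_rp_iff.1 hR with ⟨a, ha, rfl⟩ | ⟨d, hd, rfl⟩ |
    ⟨c, hc, ν, hν, hbi, rfl⟩ | ⟨c, hc, ν, hν, hbi, j, rfl⟩ |
    ⟨c, hc, ν, hν, hbi, j, rfl⟩ | ⟨p, t, hlen, htA, (rfl | rfl)⟩
  · exact ⟨_, rfl, mem_c2_posBase.2 ha⟩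
  · exact ⟨_, rfl, mem_c2_posDom.2 hd⟩
  · -- triggering rule
    have hpos : ∀ a ∈ c.pos, grd ν a ∉ r.atoms := by
      intro a ha h
      exact hnb _ ⟨a, ha, rfl⟩ (mem_c2_posBase.2 h)
    have hneg : ∀ a ∈ c.neg, grd ν a ∈ r.atoms := by
      intro a ha
      exact mem_c2_posBase.1 (hbody (Or.inr ⟨a, ha, rfl⟩))
    have hh := hρ₂ c hc ν hν
    simp only [BIC.holdsAt] at hh
    rcases hh with ⟨a, ha, h⟩ | ⟨a, ha, h⟩ | h
    · replace h : grd ν a ∈ ρ₂ := h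
      have hρa : grd ν a ∈ ρ := hc1 _ h (hpos a ha)
      exact ⟨_, Or.inl ⟨a, ha, rfl⟩, mem_c2_posPrimed.2 ⟨hρa, h⟩⟩
    · refine ⟨_, Or.inr ⟨a, ha, rfl⟩, mem_c2_negPrimed.2
        ⟨grd_mem_Tset hν (c.wfneg a ha), ?_⟩⟩
      rintro (h1 | ⟨-, h2⟩)
      · exact hc2 _ (hneg a ha) h h1
      · exact h h2
    · exact absurd h hbi
  · -- stabilizing rule, positive literal j
    have hj := mem_c2_negPrimed.1 (hbody (Or.inr rfl))
    have hjT : grd ν (c.pos.get j) ∈ Tset r := hj.1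
    have hjρ : grd ν (c.pos.get j) ∉ ρ := fun h => hj.2 (Or.inl h)
    have hjr : grd ν (c.pos.get j) ∈ r.atoms → grd ν (c.pos.get j) ∉ ρ₂ :=
      fun h1 h2 => hj.2 (Or.inr ⟨h1, h2⟩)
    have hh := hρ₂ c hc ν hν
    simp only [BIC.holdsAt] at hh
    rcases hh with ⟨a, ha, h⟩ | ⟨a, ha, h⟩ | h
    · -- ground of a is in ρ₂
      replace h : grd ν a ∈ ρ₂ := h
      by_cases haρ : grd ν a ∈ ρ
      · -- head via the positive part
        obtain ⟨i, rfl⟩ := List.mem_iff_get.1 ha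
        have hij : i ≠ j := by
          intro he; subst he; exact hjρ haρ
        exact ⟨_, Or.inl ⟨i, hij, rfl⟩, mem_c2_posPrimed.2 ⟨haρ, h⟩⟩
      · -- bad case: ground of a in r ∩ ρ₂ but not in ρ; use ρ's constraint
        have har : grd ν a ∈ r.atoms := by
          by_contra har
          exact haρ (hc1 _ h har)
        have haj : grd ν a ≠ grd ν (c.pos.get j) := by
          intro he; rw [he] at har h; exact hjr har h
        have hh' := hρ c hc ν hν
        simp only [BIC.holdsAt] at hh'
        rcases hh' with ⟨a', ha', h'⟩ | ⟨a', ha', h'⟩ | h'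
        · replace h' : grd ν a' ∈ ρ := h'
          -- three distinct positive atoms: contradiction with binarity
          have h1 : a' ≠ a := grd_ne (fun he => haρ (he ▸ h'))
          have h2 : a' ≠ c.pos.get j := grd_ne (fun he => hjρ (he ▸ h'))
          have h3 : a ≠ c.pos.get j := grd_ne haj
          have := three_le_length ha' ha (get_mem' c.pos j) h1 h2 h3
          have := c.ub
          omega
        · -- head via a negative literal not in ρ
          replace h' : grd ν a' ∉ ρ := h'
          refine ⟨_, Or.inr ⟨a', ha', rfl⟩, mem_c2_negPrimed.2
            ⟨grd_mem_Tset hν (c.wfneg a' ha'), ?_⟩⟩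
          rintro (h1 | ⟨h1, h2⟩)
          · exact h' h1
          · -- degenerate: would force 3 database literals
            have h3 : a ≠ c.pos.get j := grd_ne haj
            have := two_le_length ha (get_mem' c.pos j) h3
            have hne : 1 ≤ c.neg.length := List.length_pos_of_mem ha'
            have := c.ub
            omega
        · exact absurd h' hbi
    · -- ground of a (negative literal) not in ρ₂
      replace h : grd ν a ∉ ρ₂ := h
      by_cases hgρ : grd ν a ∈ ρ
      · -- then the ground of a is outside r
        have har : grd ν a ∉ r.atoms := fun har => hc2 _ har h hgρ
        have hh' := hρ c hc ν hν
        simp only [BIC.holdsAt] at hh'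
        rcases hh' with ⟨a', ha', h'⟩ | ⟨a', ha', h'⟩ | h'
        · replace h' : grd ν a' ∈ ρ := h'
          have h2 : a' ≠ c.pos.get j := grd_ne (fun he => hjρ (he ▸ h'))
          have := two_le_length ha' (get_mem' c.pos j) h2
          have hne : 1 ≤ c.neg.length := List.length_pos_of_mem ha
          have := c.ub
          omega
        · replace h' : grd ν a' ∉ ρ := h'
          by_cases haa' : grd ν a' ∈ r.atoms ∩ ρ₂
          · have h3 : a' ≠ a := grd_ne (fun he => h' (he ▸ hgρ))
            have := two_le_length ha' ha h3
            have hpe : 0 < c.pos.length := j.pos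
            have := c.ub
            omega
          · refine ⟨_, Or.inr ⟨a', ha', rfl⟩, mem_c2_negPrimed.2
              ⟨grd_mem_Tset hν (c.wfneg a' ha'), ?_⟩⟩
            rintro (h1 | h1)
            · exact h' h1
            · exact haa' h1
        · exact absurd h' hbi
      · -- witness a itself works
        refine ⟨_, Or.inr ⟨a, ha, rfl⟩, mem_c2_negPrimed.2
          ⟨grd_mem_Tset hν (c.wfneg a ha), ?_⟩⟩
        rintro (h1 | ⟨h1, h2⟩)
        · exact hgρ h1
        · exact h h2
    · exact absurd h hbi
  · -- stabilizing rule, negative literal j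
    have hj := mem_c2_posPrimed.1 (hbody (Or.inr rfl))
    have hjρ : grd ν (c.neg.get j) ∈ ρ := hj.1
    have hjρ₂ : grd ν (c.neg.get j) ∈ ρ₂ := hj.2
    have hh := hρ₂ c hc ν hν
    simp only [BIC.holdsAt] at hh
    rcases hh with ⟨a, ha, h⟩ | ⟨a, ha, h⟩ | h
    · replace h : grd ν a ∈ ρ₂ := h
      by_cases haρ : grd ν a ∈ ρ
      · exact ⟨_, Or.inl ⟨a, ha, rfl⟩, mem_c2_posPrimed.2 ⟨haρ, h⟩⟩
      · have har : grd ν a ∈ r.atoms := by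
          by_contra har; exact haρ (hc1 _ h har)
        have hh' := hρ c hc ν hν
        simp only [BIC.holdsAt] at hh'
        rcases hh' with ⟨a', ha', h'⟩ | ⟨a', ha', h'⟩ | h'
        · replace h' : grd ν a' ∈ ρ := h'
          have h1 : a' ≠ a := grd_ne (fun he => haρ (he ▸ h'))
          have := two_le_length ha' ha h1
          have hnee : 0 < c.neg.length := j.pos
          have := c.ub
          omega
        · -- head via negative literal a' ≠ get j
          replace h' : grd ν a' ∉ ρ := h'
          obtain ⟨k, rfl⟩ := List.mem_iff_get.1 ha'
          have hkj : k ≠ j := by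
            intro he; subst he; exact h' hjρ
          refine ⟨_, Or.inr ⟨k, hkj, rfl⟩, mem_c2_negPrimed.2
            ⟨grd_mem_Tset hν (c.wfneg _ (get_mem' c.neg k)), ?_⟩⟩
          rintro (h1 | ⟨h1, h2⟩)
          · exact h' h1
          · -- degenerate: get j, get k distinct in neg, a in pos
            have h3 : c.neg.get k ≠ c.neg.get j := grd_ne (fun he => h' (he ▸ hjρ))
            have := two_le_length (get_mem' c.neg k) (get_mem' c.neg j) h3
            have hpe : 1 ≤ c.pos.length := List.length_pos_of_mem ha
            have := c.ub
            omega
        · exact absurd h' hbi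
    · -- ground of a (negative) not in ρ₂; a ≠ get j
      replace h : grd ν a ∉ ρ₂ := h
      obtain ⟨k, rfl⟩ := List.mem_iff_get.1 ha
      have hkj : k ≠ j := by
        intro he; subst he; exact h hjρ₂
      by_cases hgρ : grd ν (c.neg.get k) ∈ ρ
      · have har : grd ν (c.neg.get k) ∉ r.atoms := fun har => hc2 _ har h hgρ
        have hh' := hρ c hc ν hν
        simp only [BIC.holdsAt] at hh'
        rcases hh' with ⟨a', ha', h'⟩ | ⟨a', ha', h'⟩ | h'
        · replace h' : grd ν a' ∈ ρ := h'
          have hkj' : c.neg.get k ≠ c.neg.get j := grd_ne (fun he => h (he ▸ hjρ₂))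
          have := two_le_length (get_mem' c.neg k) (get_mem' c.neg j) hkj'
          have hpe : 1 ≤ c.pos.length := List.length_pos_of_mem ha'
          have := c.ub
          omega
        · replace h' : grd ν a' ∉ ρ := h'
          have e1 : a' ≠ c.neg.get j := grd_ne (fun he => h' (he ▸ hjρ))
          have e2 : a' ≠ c.neg.get k := grd_ne (fun he => h' (he ▸ hgρ))
          have e3 : c.neg.get j ≠ c.neg.get k := grd_ne (fun hg => h (hg ▸ hjρ₂))
          have := three_le_length ha' (get_mem' c.neg j) (get_mem' c.neg k) e1 e2 e3
          have := c.ub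
          omega
        · exact absurd h' hbi
      · refine ⟨_, Or.inr ⟨k, hkj, rfl⟩, mem_c2_negPrimed.2
          ⟨grd_mem_Tset hν (c.wfneg _ (get_mem' c.neg k)), ?_⟩⟩
        rintro (h1 | ⟨h1, h2⟩)
        · exact hgρ h1
        · exact h h2
    · exact absurd h hbi
  · -- persistence rule 1
    have hT : ((p, t) : DBAtom Pred D) ∈ Tset r := ⟨hlen, htA⟩
    have h1 : Lit.neg (GAtom.primed p t) ∉ canonS r ρ := hnb _ rfl
    rw [mem_c2_negPrimed] at h1
    push_neg at h1
    have hρp : ((p, t) : DBAtom Pred D) ∈ ρ := not_not.1 (fun hn => hn (h1 hT))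
    have hr : ((p, t) : DBAtom Pred D) ∈ r.atoms := mem_c2_posBase.1 (hbody rfl)
    refine ⟨_, rfl, mem_c2_posPrimed.2 ⟨hρp, ?_⟩⟩
    by_contra hn
    exact hc2 _ hr hn hρp
  · -- persistence rule 2
    have hT : ((p, t) : DBAtom Pred D) ∈ Tset r := ⟨hlen, htA⟩
    have hb : Lit.pos (GAtom.base p t) ∉ canonS r ρ := hnb _ (Or.inl rfl)
    have hp : Lit.pos (GAtom.primed p t) ∉ canonS r ρ := hnb _ (Or.inr rfl)
    rw [mem_c2_posBase] at hb
    rw [mem_c2_posPrimed] at hp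
    refine ⟨_, rfl, mem_c2_negPrimed.2 ⟨hT, ?_⟩⟩
    rintro (h1 | ⟨h1, h2⟩)
    · exact hp h1
    · exact hb h1

lemma canonS_models_reduct {r : Instance Pred D ar} {IC : Set (BIC Pred D ar)}
    {ρ : Set (DBAtom Pred D)} (hρ : SatSetOn ρ IC (ActDom r)) :
    SatProg (canonS r ρ) (reduct (repairProgOn r IC (ActDom r)) (canonS r ρ)) := by
  have h := canonS2_models_reduct (r := r) (IC := IC) hρ hρ (fun a h _ => h)
    (fun a _ h h' => h h')
  have e1 : ρ ∩ ρ = ρ := Set.inter_self ρ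
  have e2 : ρ ∪ (r.atoms ∩ ρ) = ρ :=
    Set.union_eq_self_of_subset_right Set.inter_subset_right
  rwa [e1, e2] at h

lemma satSetOn_of_models {r : Instance Pred D ar} {IC : Set (BIC Pred D ar)}
    {ρ : Set (DBAtom Pred D)}
    (h : SatProg (canonS r ρ) (reduct (repairProgOn r IC (ActDom r)) (canonS r ρ))) :
    SatSetOn ρ IC (ActDom r) := by
  rw [satProg_reduct_iff] at h
  intro c hc ν hν
  simp only [BIC.holdsAt]
  by_contra hviol
  push_neg at hviol
  obtain ⟨hpos, hneg, hbi⟩ := hviol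
  by_cases hP : c.pos.length = 0
  · -- use a negative stabilizing rule
    have hn1 : 1 ≤ c.neg.length := by have := c.lb; omega
    set j : Fin c.neg.length := ⟨0, hn1⟩ with hjdef
    have hmem : stabNegRule c ν j ∈ repairProgOn r IC (ActDom r) :=
      mem_rp_iff.2 (Or.inr (Or.inr (Or.inr (Or.inr (Or.inl
        ⟨c, hc, ν, hν, hbi, j, rfl⟩)))))
    have hhead := h _ hmem (by intro L hL; simp [stabNegRule] at hL) ?_
    · obtain ⟨L, hL, hLS⟩ := hhead
      rcases hL with ⟨a, ha, rfl⟩ | ⟨k, hkj, rfl⟩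
      · exact hpos a ha (mem_c2_posPrimed.1 hLS)
      · exact (mem_c2_negPrimed.1 hLS).2 (hneg _ (get_mem' c.neg k))
    · rintro L (⟨v, hv, rfl⟩ | rfl)
      · exact mem_c2_posDom.2 (hν v)
      · exact mem_c2_posPrimed.2 (hneg _ (get_mem' c.neg j))
  · -- use a positive stabilizing rule
    set j : Fin c.pos.length := ⟨0, Nat.pos_of_ne_zero hP⟩ with hjdef
    have hmem : stabPosRule c ν j ∈ repairProgOn r IC (ActDom r) :=
      mem_rp_iff.2 (Or.inr (Or.inr (Or.inr (Or.inl
        ⟨c, hc, ν, hν, hbi, j, rfl⟩))))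
    have hhead := h _ hmem (by intro L hL; simp [stabPosRule] at hL) ?_
    · obtain ⟨L, hL, hLS⟩ := hhead
      rcases hL with ⟨i, hij, rfl⟩ | ⟨a, ha, rfl⟩
      · exact hpos _ (get_mem' c.pos i) (mem_c2_posPrimed.1 hLS)
      · exact (mem_c2_negPrimed.1 hLS).2 (hneg a ha)
    · rintro L (⟨v, hv, rfl⟩ | rfl)
      · exact mem_c2_posDom.2 (hν v)
      · exact mem_c2_negPrimed.2 ⟨grd_mem_Tset hν (c.wfpos _ (get_mem' c.pos j)),
          hpos _ (get_mem' c.pos j)⟩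

/-- Upper bound for the literals occurring in rule heads. -/
def Hset (r : Instance Pred D ar) : Set (Lit (GAtom Pred D)) := canonS2 r (Tset r) ∅

lemma heads_sub {r : Instance Pred D ar} {IC : Set (BIC Pred D ar)}
    {R : Rule (GAtom Pred D)} (hR : R ∈ repairProgOn r IC (ActDom r)) :
    R.head ⊆ Hset r := by
  rcases mem_rp_iff.1 hR with ⟨a, ha, rfl⟩ | ⟨d, hd, rfl⟩ |
    ⟨c, hc, ν, hν, hbi, rfl⟩ | ⟨c, hc, ν, hν, hbi, j, rfl⟩ |
    ⟨c, hc, ν, hν, hbi, j, rfl⟩ | ⟨p, t, hlen, htA, (rfl | rfl)⟩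
  · intro L hL
    have hL' : L = Lit.pos (GAtom.base a.1 a.2) := hL
    subst hL'
    exact mem_c2_posBase.2 ha
  · intro L hL
    have hL' : L = Lit.pos (GAtom.dom d) := hL
    subst hL'
    exact mem_c2_posDom.2 hd
  · rintro L (⟨a, ha, rfl⟩ | ⟨a, ha, rfl⟩)
    · exact mem_c2_posPrimed.2 (grd_mem_Tset hν (c.wfpos a ha))
    · exact mem_c2_negPrimed.2 ⟨grd_mem_Tset hν (c.wfneg a ha), Set.notMem_empty _⟩
  · rintro L (⟨i, hij, rfl⟩ | ⟨a, ha, rfl⟩)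
    · exact mem_c2_posPrimed.2 (grd_mem_Tset hν (c.wfpos _ (get_mem' c.pos i)))
    · exact mem_c2_negPrimed.2 ⟨grd_mem_Tset hν (c.wfneg a ha), Set.notMem_empty _⟩
  · rintro L (⟨a, ha, rfl⟩ | ⟨k, hkj, rfl⟩)
    · exact mem_c2_posPrimed.2 (grd_mem_Tset hν (c.wfpos a ha))
    · exact mem_c2_negPrimed.2 ⟨grd_mem_Tset hν (c.wfneg _ (get_mem' c.neg k)),
        Set.notMem_empty _⟩
  · intro L hL; rw [Set.mem_singleton_iff] at hL; subst hL
    exact mem_c2_posPrimed.2 ⟨hlen, htA⟩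
  · intro L hL; rw [Set.mem_singleton_iff] at hL; subst hL
    exact mem_c2_negPrimed.2 ⟨⟨hlen, htA⟩, Set.notMem_empty _⟩

lemma answerSet_shape {r : Instance Pred D ar} {IC : Set (BIC Pred D ar)}
    {S : Set (Lit (GAtom Pred D))}
    (hA : AnswerSet S (repairProgOn r IC (ActDom r))) :
    primedAtoms S ⊆ Tset r ∧ S = canonS r (primedAtoms S) := by
  obtain ⟨hcoh, hsat, hmin⟩ := hA
  have hSH : S ⊆ Hset r := by
    have hmod : SatProg (S ∩ Hset r) (reduct (repairProgOn r IC (ActDom r)) S) := by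
      rw [satProg_reduct_iff] at hsat ⊢
      intro R hR hnb hb
      obtain ⟨L, hL, hLS⟩ := hsat R hR hnb (fun x hx => (hb hx).1)
      exact ⟨L, hL, hLS, heads_sub hR hL⟩
    have heq := hmin _ Set.inter_subset_left hmod
    intro L hL
    have h2 : L ∈ S ∩ Hset r := by rw [heq]; exact hL
    exact h2.2
  obtain ⟨hbase, hdom⟩ := facts_mem hsat
  have htot : ∀ a ∈ Tset r, Lit.pos (GAtom.primed a.1 a.2) ∈ S ∨
      Lit.neg (GAtom.primed a.1 a.2) ∈ S := by
    intro a haT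
    by_contra hcon
    push_neg at hcon
    obtain ⟨h1, h2⟩ := hcon
    rw [satProg_reduct_iff] at hsat
    by_cases har : a ∈ r.atoms
    · have := hsat _ (mem_rp_iff.2 (Or.inr (Or.inr (Or.inr (Or.inr (Or.inr
        ⟨a.1, a.2, haT.1, haT.2, Or.inl rfl⟩))))))
        (by intro L hL; rw [Set.mem_singleton_iff] at hL; subst hL; exact h2)
        (by intro L hL; rw [Set.mem_singleton_iff] at hL; subst hL; exact hbase a har)
      obtain ⟨L, hL, hLS⟩ := this
      rw [Set.mem_singleton_iff] at hL; subst hL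
      exact h1 hLS
    · have := hsat _ (mem_rp_iff.2 (Or.inr (Or.inr (Or.inr (Or.inr (Or.inr
        ⟨a.1, a.2, haT.1, haT.2, Or.inr rfl⟩))))))
        (by
          rintro L (rfl | rfl)
          · intro hLS; exact har (mem_c2_posBase.1 (hSH hLS))
          · exact h1)
        (by rintro L ⟨d, hd, rfl⟩; exact hdom d (haT.2 d hd))
      obtain ⟨L, hL, hLS⟩ := this
      rw [Set.mem_singleton_iff] at hL; subst hL
      exact h2 hLS
  have hT : primedAtoms S ⊆ Tset r := by
    intro a ha
    exact mem_c2_posPrimed.1 (hSH ha)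
  refine ⟨hT, ?_⟩
  ext L
  rcases L with (⟨p, t⟩ | ⟨p, t⟩ | d) | (⟨p, t⟩ | ⟨p, t⟩ | d)
  · constructor
    · intro h; exact mem_c2_posBase.2 (mem_c2_posBase.1 (hSH h))
    · intro h; exact hbase (p, t) (mem_c2_posBase.1 h)
  · constructor
    · intro h; exact mem_c2_posPrimed.2 h
    · intro h; exact mem_c2_posPrimed.1 h
  · constructor
    · intro h; exact mem_c2_posDom.2 (mem_c2_posDom.1 (hSH h))
    · intro h; exact hdom d (mem_c2_posDom.1 h)
  · constructor
    · intro h; exact absurd (hSH h) mem_c2_negBase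
    · intro h; exact absurd h mem_c2_negBase
  · constructor
    · intro h
      refine mem_c2_negPrimed.2 ⟨(mem_c2_negPrimed.1 (hSH h)).1, ?_⟩
      intro hp
      exact hcoh _ ⟨hp, h⟩
    · intro h
      obtain ⟨hT', hnρ⟩ := mem_c2_negPrimed.1 h
      rcases htot (p, t) hT' with hp | hn
      · exact absurd hp hnρ
      · exact hn
  · constructor
    · intro h; exact absurd (hSH h) mem_c2_negDom
    · intro h; exact absurd h mem_c2_negDom

lemma canonS2_mono {r : Instance Pred D ar} {m m' M M' : Set (DBAtom Pred D)}
    (hm : m ⊆ m') (hM : M' ⊆ M) : canonS2 r m M ⊆ canonS2 r m' M' := by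
  rintro L (h | h | ⟨a, ha, rfl⟩ | ⟨a, ha, hM2, rfl⟩)
  · exact Or.inl h
  · exact Or.inr (Or.inl h)
  · exact Or.inr (Or.inr (Or.inl ⟨a, hm ha, rfl⟩))
  · exact Or.inr (Or.inr (Or.inr ⟨a, ha, fun hx => hM2 (hM hx), rfl⟩))

lemma satSetOn_inter_Tset {r : Instance Pred D ar} {IC : Set (BIC Pred D ar)}
    {B : Set (DBAtom Pred D)} (hB : SatSet B IC) :
    SatSetOn (B ∩ Tset r) IC (ActDom r) := by
  intro c hc ν hν
  have hh := hB c hc ν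
  simp only [BIC.holdsAt] at hh ⊢
  rcases hh with ⟨a, ha, h⟩ | ⟨a, ha, h⟩ | h
  · exact Or.inl ⟨a, ha, h, grd_mem_Tset hν (c.wfpos a ha)⟩
  · exact Or.inr (Or.inl ⟨a, ha, fun hx => h hx.1⟩)
  · exact Or.inr (Or.inr h)

lemma satSet_of_on {r : Instance Pred D ar} {IC : Set (BIC Pred D ar)}
    (hIC : DomIndep IC) {B : Set (DBAtom Pred D)} (hBT : B ⊆ Tset r)
    (hfin : B.Finite) (hon : SatSetOn B IC (ActDom r)) : SatSet B IC := by
  have hAct : ActDom (⟨B, hfin, fun a ha => (hBT ha).1⟩ : Instance Pred D ar) ⊆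
      ActDom r := by
    rintro d ⟨a, ha, hd⟩
    exact (hBT ha).2 d hd
  exact (hIC ⟨B, hfin, fun a ha => (hBT ha).1⟩ (ActDom r) hAct).1 hon

lemma symmDiff_cancel {α : Type*} {s t u : Set α}
    (h : symmDiff s t = symmDiff s u) : t = u := by
  calc t = symmDiff s (symmDiff s t) := (symmDiff_symmDiff_cancel_left s t).symm
  _ = symmDiff s (symmDiff s u) := by rw [h]
  _ = u := symmDiff_symmDiff_cancel_left s u

lemma repair_subset_Tset {r : Instance Pred D ar} {IC : Set (BIC Pred D ar)}
    (hIC : DomIndep IC) {r' : Instance Pred D ar} (hrep : IsRepair r r' IC) :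
    r'.atoms ⊆ Tset r := by
  set ρ₂ : Set (DBAtom Pred D) := r'.atoms ∩ Tset r with hρ₂
  have hon : SatSetOn ρ₂ IC (ActDom r) := satSetOn_inter_Tset hrep.1
  have hfin : ρ₂.Finite := r'.finite.subset Set.inter_subset_left
  have hsat : SatSet ρ₂ IC := satSet_of_on hIC Set.inter_subset_right hfin hon
  have hΔ : symmDiff r.atoms ρ₂ ⊆ symmDiff r.atoms r'.atoms := by
    intro a ha; rw [Set.mem_symmDiff] at ha ⊢
    rcases ha with ⟨har, hn⟩ | ⟨h2, har⟩
    · exact Or.inl ⟨har, fun hx => hn ⟨hx, atoms_subset_Tset r har⟩⟩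
    · exact Or.inr ⟨h2.1, har⟩
  have heq := hrep.2 ⟨ρ₂, hfin, fun a ha => (ha.2).1⟩ hsat hΔ
  have : ρ₂ = r'.atoms := symmDiff_cancel heq
  rw [← this]
  exact Set.inter_subset_right

/-- Direction (a): if `r'` is a repair then the canonical set is a minimal
model of the reduct. -/
lemma canonS_minimal {r : Instance Pred D ar} {IC : Set (BIC Pred D ar)}
    (hIC : DomIndep IC) {r' : Instance Pred D ar} (hrep : IsRepair r r' IC)
    (hT : r'.atoms ⊆ Tset r) {S' : Set (Lit (GAtom Pred D))}
    (hsub : S' ⊆ canonS r r'.atoms)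
    (hmod : SatProg S' (reduct (repairProgOn r IC (ActDom r)) (canonS r r'.atoms))) :
    S' = canonS r r'.atoms := by
  obtain ⟨hbase, hdom⟩ := facts_mem hmod
  set ρ : Set (DBAtom Pred D) := r'.atoms with hρdef
  set ρ'' : Set (DBAtom Pred D) :=
    {a | Lit.pos (GAtom.primed a.1 a.2) ∈ S'} ∪
    {a | a ∈ r.atoms ∧ Lit.neg (GAtom.primed a.1 a.2) ∉ S'} with hρ''def
  have hsub1 : {a : DBAtom Pred D | Lit.pos (GAtom.primed a.1 a.2) ∈ S'} ⊆ ρ :=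
    fun a ha => mem_c2_posPrimed.1 (hsub ha)
  have hρ''T : ρ'' ⊆ Tset r := by
    rintro a (ha | ⟨ha, -⟩)
    · exact hT (hsub1 ha)
    · exact atoms_subset_Tset r ha
  have hfin : ρ''.Finite :=
    Set.Finite.union (r'.finite.subset hsub1) (r.finite.subset (fun a ha => ha.1))
  have hmem1 : ∀ a, a ∈ r.atoms →
      (a ∈ ρ'' ↔ Lit.neg (GAtom.primed a.1 a.2) ∉ S') := by
    intro a har
    constructor
    · rintro (ha | ⟨-, ha⟩) hn
      · exact (mem_c2_negPrimed.1 (hsub hn)).2 (mem_c2_posPrimed.1 (hsub ha))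
      · exact ha hn
    · intro hn; exact Or.inr ⟨har, hn⟩
  have hmem2 : ∀ a, a ∉ r.atoms →
      (a ∈ ρ'' ↔ Lit.pos (GAtom.primed a.1 a.2) ∈ S') := by
    intro a har
    constructor
    · rintro (ha | ⟨ha, -⟩)
      · exact ha
      · exact absurd ha har
    · exact Or.inl
  rw [satProg_reduct_iff] at hmod
  have hon : SatSetOn ρ'' IC (ActDom r) := by
    intro c hc ν hν
    simp only [BIC.holdsAt]
    by_contra hviol
    push_neg at hviol
    obtain ⟨hpos, hneg, hbi⟩ := hviol
    replace hpos : ∀ a ∈ c.pos, grd ν a ∉ ρ'' := hpos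
    replace hneg : ∀ a ∈ c.neg, grd ν a ∈ ρ'' := hneg
    -- helper: a negative head literal in S' yields a contradiction
    have hcontra : ∀ a' ∈ c.neg,
        Lit.neg (GAtom.primed a'.1 (List.map ν a'.2)) ∈ S' → False := by
      intro a' ha' hLS
      have hρ''a := hneg a' ha'
      by_cases har' : grd ν a' ∈ r.atoms
      · exact (hmem1 _ har').1 hρ''a hLS
      · have hp := (hmem2 _ har').1 hρ''a
        exact (mem_c2_negPrimed.1 (hsub hLS)).2 (mem_c2_posPrimed.1 (hsub hp))
    by_cases hcase1 : ∃ a ∈ c.pos, grd ν a ∈ r.atoms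
    · obtain ⟨a, ha, har⟩ := hcase1
      obtain ⟨j, rfl⟩ := List.mem_iff_get.1 ha
      have hnS' : Lit.neg (GAtom.primed (c.pos.get j).1
          (List.map ν (c.pos.get j).2)) ∈ S' := by
        by_contra hn
        exact hpos _ (get_mem' c.pos j) ((hmem1 _ har).2 hn)
      have hmem : stabPosRule c ν j ∈ repairProgOn r IC (ActDom r) :=
        mem_rp_iff.2 (Or.inr (Or.inr (Or.inr (Or.inl ⟨c, hc, ν, hν, hbi, j, rfl⟩))))
      have := hmod _ hmem (by intro L hL; simp [stabPosRule] at hL) ?_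
      · obtain ⟨L, hL, hLS⟩ := this
        rcases hL with ⟨i, hij, rfl⟩ | ⟨a', ha', rfl⟩
        · exact hpos _ (get_mem' c.pos i) (Or.inl hLS)
        · exact hcontra a' ha' hLS
      · rintro L (⟨v, hv, rfl⟩ | rfl)
        · exact hdom _ (hν v)
        · exact hnS'
    · by_cases hcase2 : ∃ a ∈ c.neg, grd ν a ∉ r.atoms
      · obtain ⟨a, ha, har⟩ := hcase2
        obtain ⟨j, rfl⟩ := List.mem_iff_get.1 ha
        have hpS' : Lit.pos (GAtom.primed (c.neg.get j).1
            (List.map ν (c.neg.get j).2)) ∈ S' :=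
          (hmem2 _ har).1 (hneg _ (get_mem' c.neg j))
        have hmem : stabNegRule c ν j ∈ repairProgOn r IC (ActDom r) :=
          mem_rp_iff.2 (Or.inr (Or.inr (Or.inr (Or.inr (Or.inl
            ⟨c, hc, ν, hν, hbi, j, rfl⟩)))))
        have := hmod _ hmem (by intro L hL; simp [stabNegRule] at hL) ?_
        · obtain ⟨L, hL, hLS⟩ := this
          rcases hL with ⟨a', ha', rfl⟩ | ⟨k, hkj, rfl⟩
          · exact hpos a' ha' (Or.inl hLS)
          · exact hcontra _ (get_mem' c.neg k) hLS
        · rintro L (⟨v, hv, rfl⟩ | rfl)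
          · exact hdom _ (hν v)
          · exact hpS'
      · push_neg at hcase1 hcase2
        have hmem : trigRule c ν ∈ repairProgOn r IC (ActDom r) :=
          mem_rp_iff.2 (Or.inr (Or.inr (Or.inl ⟨c, hc, ν, hν, hbi, rfl⟩)))
        have := hmod _ hmem ?_ ?_
        · obtain ⟨L, hL, hLS⟩ := this
          rcases hL with ⟨a', ha', rfl⟩ | ⟨a', ha', rfl⟩
          · exact hpos a' ha' (Or.inl hLS)
          · exact hcontra a' ha' hLS
        · rintro L ⟨a', ha', rfl⟩ hLS
          exact hcase1 a' ha' (mem_c2_posBase.1 hLS)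
        · rintro L (⟨v, hv, rfl⟩ | ⟨a', ha', rfl⟩)
          · exact hdom _ (hν v)
          · exact hbase _ (hcase2 a' ha')
  have hsatset : SatSet ρ'' IC := satSet_of_on hIC hρ''T hfin hon
  have hΔ : symmDiff r.atoms ρ'' ⊆ symmDiff r.atoms ρ := by
    intro a ha
    rw [Set.mem_symmDiff] at ha ⊢
    rcases ha with ⟨har, hn⟩ | ⟨hρ''a, har⟩
    · have hnS' : Lit.neg (GAtom.primed a.1 a.2) ∈ S' := by
        by_contra hc'
        exact hn ((hmem1 a har).2 hc')
      exact Or.inl ⟨har, (mem_c2_negPrimed.1 (hsub hnS')).2⟩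
    · have hp := (hmem2 a har).1 hρ''a
      exact Or.inr ⟨mem_c2_posPrimed.1 (hsub hp), har⟩
  have heq := hrep.2 ⟨ρ'', hfin, fun a ha => (hρ''T ha).1⟩ hsatset hΔ
  refine Set.Subset.antisymm hsub ?_
  intro L hL
  rcases L with (⟨p, t⟩ | ⟨p, t⟩ | d) | (⟨p, t⟩ | ⟨p, t⟩ | d)
  · exact hbase (p, t) (mem_c2_posBase.1 hL)
  · -- positive primed literal
    have hρa : ((p, t) : DBAtom Pred D) ∈ ρ := mem_c2_posPrimed.1 hL
    by_cases har : ((p, t) : DBAtom Pred D) ∈ r.atoms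
    · have hTm : ((p, t) : DBAtom Pred D) ∈ Tset r := atoms_subset_Tset r har
      have hmem : Rule.mk {Lit.pos (GAtom.primed p t)} {Lit.pos (GAtom.base p t)}
          {Lit.neg (GAtom.primed p t)} ∈ repairProgOn r IC (ActDom r) :=
        mem_rp_iff.2 (Or.inr (Or.inr (Or.inr (Or.inr (Or.inr
          ⟨p, t, hTm.1, hTm.2, Or.inl rfl⟩)))))
      have := hmod _ hmem ?_ ?_
      · obtain ⟨L, hL', hLS⟩ := this
        have hL'' : L = Lit.pos (GAtom.primed p t) := hL'
        subst hL''
        exact hLS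
      · intro L hL' hLS
        have hL'' : L = Lit.neg (GAtom.primed p t) := hL'
        subst hL''
        exact (mem_c2_negPrimed.1 hLS).2 hρa
      · intro L hL'
        have hL'' : L = Lit.pos (GAtom.base p t) := hL'
        subst hL''
        exact hbase _ har
    · have hd : ((p, t) : DBAtom Pred D) ∈ symmDiff r.atoms ρ :=
        Set.mem_symmDiff.2 (Or.inr ⟨hρa, har⟩)
      rw [← heq] at hd
      rcases Set.mem_symmDiff.1 hd with ⟨h1, -⟩ | ⟨h1, -⟩
      · exact absurd h1 har
      · exact (hmem2 _ har).1 h1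
  · exact hdom d (mem_c2_posDom.1 hL)
  · exact absurd hL mem_c2_negBase
  · -- negative primed literal
    obtain ⟨hTm, hnρ⟩ := mem_c2_negPrimed.1 hL
    by_cases har : ((p, t) : DBAtom Pred D) ∈ r.atoms
    · have hd : ((p, t) : DBAtom Pred D) ∈ symmDiff r.atoms ρ :=
        Set.mem_symmDiff.2 (Or.inl ⟨har, hnρ⟩)
      rw [← heq] at hd
      rcases Set.mem_symmDiff.1 hd with ⟨-, h1⟩ | ⟨-, h1⟩
      · by_contra hn
        exact h1 ((hmem1 _ har).2 hn)
      · exact absurd har h1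
    · have hmem : Rule.mk {Lit.neg (GAtom.primed p t)}
          {L | ∃ d ∈ t, L = Lit.pos (GAtom.dom d)}
          {Lit.pos (GAtom.base p t), Lit.pos (GAtom.primed p t)} ∈
          repairProgOn r IC (ActDom r) :=
        mem_rp_iff.2 (Or.inr (Or.inr (Or.inr (Or.inr (Or.inr
          ⟨p, t, hTm.1, hTm.2, Or.inr rfl⟩)))))
      have := hmod _ hmem ?_ ?_
      · obtain ⟨L, hL', hLS⟩ := this
        have hL'' : L = Lit.neg (GAtom.primed p t) := hL'
        subst hL''
        exact hLS
      · rintro L (rfl | rfl)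
        · intro hLS; exact har (mem_c2_posBase.1 hLS)
        · intro hLS; exact hnρ (mem_c2_posPrimed.1 hLS)
      · rintro L ⟨d, hd, rfl⟩
        exact hdom d (hTm.2 d hd)
  · exact absurd hL mem_c2_negDom

/-- Direction (b): answer-set minimality yields repair minimality. -/
lemma repair_min_of_answerSet {r : Instance Pred D ar} {IC : Set (BIC Pred D ar)}
    (hIC : DomIndep IC) {S : Set (Lit (GAtom Pred D))}
    (hA : AnswerSet S (repairProgOn r IC (ActDom r)))
    {r'' : Instance Pred D ar} (hsat : SatIC r'' IC)
    (hΔ : symmDiff r.atoms r''.atoms ⊆ symmDiff r.atoms (primedAtoms S)) :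
    symmDiff r.atoms r''.atoms = symmDiff r.atoms (primedAtoms S) := by
  obtain ⟨hT, hshape⟩ := answerSet_shape hA
  obtain ⟨hcoh, hsat0, hmin⟩ := hA
  set ρ : Set (DBAtom Pred D) := primedAtoms S with hρdef
  set ρ₂ : Set (DBAtom Pred D) := r''.atoms ∩ Tset r with hρ₂def
  have hρ₂on : SatSetOn ρ₂ IC (ActDom r) := satSetOn_inter_Tset hsat
  have hΔ2 : symmDiff r.atoms ρ₂ ⊆ symmDiff r.atoms r''.atoms := by
    intro a ha; rw [Set.mem_symmDiff] at ha ⊢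
    rcases ha with ⟨har, hn⟩ | ⟨h2, har⟩
    · exact Or.inl ⟨har, fun hx => hn ⟨hx, atoms_subset_Tset r har⟩⟩
    · exact Or.inr ⟨h2.1, har⟩
  have hΔ2' : symmDiff r.atoms ρ₂ ⊆ symmDiff r.atoms ρ := hΔ2.trans hΔ
  have hc1 : ∀ a, a ∈ ρ₂ → a ∉ r.atoms → a ∈ ρ := by
    intro a h1 h2
    have hm : a ∈ symmDiff r.atoms ρ₂ := Set.mem_symmDiff.2 (Or.inr ⟨h1, h2⟩)
    rcases Set.mem_symmDiff.1 (hΔ2' hm) with ⟨har, -⟩ | ⟨hρa, -⟩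
    · exact absurd har h2
    · exact hρa
  have hc2 : ∀ a, a ∈ r.atoms → a ∉ ρ₂ → a ∉ ρ := by
    intro a h1 h2 hρa
    have hm : a ∈ symmDiff r.atoms ρ₂ := Set.mem_symmDiff.2 (Or.inl ⟨h1, h2⟩)
    rcases Set.mem_symmDiff.1 (hΔ2' hm) with ⟨-, hn⟩ | ⟨-, hn⟩
    · exact hn hρa
    · exact hn h1
  have hρon : SatSetOn ρ IC (ActDom r) := by
    apply satSetOn_of_models (r := r) (IC := IC)
    rw [← hshape]
    exact hsat0
  have hmod := canonS2_models_reduct (r := r) hρon hρ₂on hc1 hc2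
  have hsub : canonS2 r (ρ ∩ ρ₂) (ρ ∪ (r.atoms ∩ ρ₂)) ⊆ canonS r ρ :=
    canonS2_mono Set.inter_subset_left Set.subset_union_left
  have hmin' := hmin (canonS2 r (ρ ∩ ρ₂) (ρ ∪ (r.atoms ∩ ρ₂)))
    (by rw [hshape]; exact hsub) (by rw [hshape]; exact hmod)
  have he : canonS2 r (ρ ∩ ρ₂) (ρ ∪ (r.atoms ∩ ρ₂)) = canonS r ρ :=
    hmin'.trans hshape
  have h1 : ρ ⊆ ρ₂ := by
    intro a ha
    have hx : Lit.pos (GAtom.primed a.1 a.2) ∈ canonS r ρ := mem_c2_posPrimed.2 ha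
    rw [← he] at hx
    exact (mem_c2_posPrimed.1 hx).2
  have h2 : ∀ a, a ∈ r.atoms → a ∈ ρ₂ → a ∈ ρ := by
    intro a har h2a
    by_contra hn
    have hx : Lit.neg (GAtom.primed a.1 a.2) ∈ canonS r ρ :=
      mem_c2_negPrimed.2 ⟨atoms_subset_Tset r har, hn⟩
    rw [← he] at hx
    exact (mem_c2_negPrimed.1 hx).2 (Or.inr ⟨har, h2a⟩)
  have h3 : symmDiff r.atoms ρ ⊆ symmDiff r.atoms ρ₂ := by
    intro a ha; rw [Set.mem_symmDiff] at ha ⊢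
    rcases ha with ⟨har, hn⟩ | ⟨hρa, har⟩
    · exact Or.inl ⟨har, fun hx => hn (h2 a har hx)⟩
    · exact Or.inr ⟨h1 hρa, har⟩
  exact Set.Subset.antisymm hΔ (h3.trans hΔ2)

end Statement7Proof

/-- Theorem `theo:domainindep`. Let `D` be an infinite
domain, `r` a database instance over `D`, and `IC` a set of domain independent
binary integrity constraints. Then the map `S ↦ {p(ā) | p′(ā) ∈ S}` is a
one-to-one correspondence between the answer sets of the repair program `Π(r)`
(built with the active-domain predicate `act_r` in place of `dom`, i.e.
grounded over `Act(r)`) and the repairs of `r` wrt `IC`. -/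
theorem statement7 {Pred D : Type} [Finite Pred] [Infinite D] {ar : Pred → ℕ}
    (r : Instance Pred D ar) (IC : Set (BIC Pred D ar)) (hIC : DomIndep IC) :
    (∀ S : Set (Lit (GAtom Pred D)), AnswerSet S (repairProgOn r IC (ActDom r)) →
      ∃ r' : Instance Pred D ar, r'.atoms = primedAtoms S ∧ IsRepair r r' IC) ∧
    (∀ r' : Instance Pred D ar, IsRepair r r' IC →
      ∃ S : Set (Lit (GAtom Pred D)), AnswerSet S (repairProgOn r IC (ActDom r)) ∧
        primedAtoms S = r'.atoms) ∧
    (∀ S S' : Set (Lit (GAtom Pred D)), AnswerSet S (repairProgOn r IC (ActDom r)) →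
      AnswerSet S' (repairProgOn r IC (ActDom r)) →
      primedAtoms S = primedAtoms S' → S = S') := by
  refine ⟨?_, ?_, ?_⟩
  · intro S hAS
    obtain ⟨hT, hshape⟩ := answerSet_shape hAS
    refine ⟨⟨primedAtoms S, (tset_finite r).subset hT, fun a ha => (hT ha).1⟩, rfl, ?_, ?_⟩
    · have h0 := hAS.2.1
      rw [hshape] at h0
      exact satSet_of_on hIC hT ((tset_finite r).subset hT) (satSetOn_of_models h0)
    · intro r'' hsat hsub
      exact repair_min_of_answerSet hIC hAS hsat hsub
  · intro r' hrep
    have hT := repair_subset_Tset hIC hrep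
    refine ⟨canonS r r'.atoms, ⟨coherent_canonS2 (subset_refl _), ?_, ?_⟩, ?_⟩
    · exact canonS_models_reduct (fun c hc ν hν => hrep.1 c hc ν)
    · intro S' hsub hmod
      exact canonS_minimal hIC hrep hT hsub hmod
    · exact primedAtoms_canonS2
  · intro S S' h1 h2 heq
    have e1 := (answerSet_shape h1).2
    have e2 := (answerSet_shape h2).2
    rw [e1, e2, heq]

end CQA
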